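/- arXiv:2012.10679 — 5 statements merged into one kernel-verified Lean document; each statement's English description precedes it below -/
import Mathlib

section
/- Let L be a positive integer, F an L×L complex matrix, J an L×L Hermitian positive definite complex matrix, and W an L×L Hermitian positive semidefinite complex matrix. Define E(G) = I_L − Gᴴ F − Fᴴ G + Gᴴ J G and G* = J⁻¹ F. Then for every L×L complex matrix G, the real part of tr(W · E(G)) is at least the real part of tr(W · E(G*)); i.e., the MMSE receive filter G* = J⁻¹F minimizes the weighted mean square error tr(W E(G)) over all receive filters G, for any positive semidefinite weight matrix W. -/
open Matrix ComplexOrder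

private lemma trace_re_nonneg_of_posSemidef {n : Type*} [Fintype n] [DecidableEq n]
    {A : Matrix n n ℂ} (hA : A.PosSemidef) : 0 ≤ (A.trace).re := by
  rw [Matrix.trace]
  simp only [Matrix.diag]
  rw [Complex.re_sum]
  apply Finset.sum_nonneg
  intro i _
  have h := hA.dotProduct_mulVec_nonneg (Pi.single i 1)
  have : A i i = star (Pi.single i 1) ⬝ᵥ A.mulVec (Pi.single i 1) := by
    simp [dotProduct, Matrix.mulVec, Pi.single_apply]
  rw [this]
  exact (Complex.le_def.mp h).1

private lemma trace_mul_re_nonneg {n : Type*} [Fintype n] [DecidableEq n]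
    {W D : Matrix n n ℂ} (hW : W.PosSemidef) (hD : D.PosSemidef) :
    0 ≤ ((W * D).trace).re := by
  open MatrixOrder in
  obtain ⟨B, hB⟩ := CStarAlgebra.nonneg_iff_eq_star_mul_self.mp hW.nonneg
  have h1 : (W * D).trace = (B * D * Bᴴ).trace := by
    rw [hB, Matrix.mul_assoc, Matrix.trace_mul_comm, Matrix.star_eq_conjTranspose]
  rw [h1]
  exact trace_re_nonneg_of_posSemidef (hD.mul_mul_conjTranspose_same B)

/-- For the MSE matrix `E(G) = I - Gᴴ F - Fᴴ G + Gᴴ J G` with `J`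
Hermitian positive definite, the MMSE filter `G* = J⁻¹ F` minimizes the weighted
mean square error `Re (tr (W * E(G)))` over all `G`, for any Hermitian positive
semidefinite weight matrix `W`. -/
theorem mmse_filter_minimizes_weighted_mse
    (L : ℕ) (hL : 0 < L)
    (F J W : Matrix (Fin L) (Fin L) ℂ) (hJ : J.PosDef) (hW : W.PosSemidef)
    (E : Matrix (Fin L) (Fin L) ℂ → Matrix (Fin L) (Fin L) ℂ)
    (hE : ∀ G, E G = 1 - Gᴴ * F - Fᴴ * G + Gᴴ * J * G)
    (Gstar : Matrix (Fin L) (Fin L) ℂ) (hGstar : Gstar = J⁻¹ * F) :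
    ∀ G : Matrix (Fin L) (Fin L) ℂ,
      ((W * E Gstar).trace).re ≤ ((W * E G).trace).re := by
  intro G
  have hJdet : IsUnit J.det := (Matrix.isUnit_iff_isUnit_det J).mp hJ.isUnit
  have h1 : J * Gstar = F := by
    rw [hGstar, ← Matrix.mul_assoc, Matrix.mul_nonsing_inv _ hJdet, Matrix.one_mul]
  have h2 : Gstarᴴ * J = Fᴴ := by
    have := congrArg Matrix.conjTranspose h1
    rwa [Matrix.conjTranspose_mul, hJ.isHermitian.eq] at this
  set D := (G - Gstar)ᴴ * J * (G - Gstar) with hDdef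
  have hD : D.PosSemidef := hJ.posSemidef.conjTranspose_mul_mul_same (G - Gstar)
  have hkey : E G = E Gstar + D := by
    have e1 : Gᴴ * J * Gstar = Gᴴ * F := by rw [Matrix.mul_assoc, h1]
    have e2 : Gstarᴴ * J * G = Fᴴ * G := by rw [h2]
    have e3 : Gstarᴴ * J * Gstar = Fᴴ * Gstar := by rw [h2]
    have e4 : Gstarᴴ * F = Fᴴ * Gstar := by
      conv_lhs => rw [← h1]
      rw [← Matrix.mul_assoc, h2]
    have hDexp : D = Gᴴ * J * G - Gᴴ * F - Fᴴ * G + Fᴴ * Gstar := by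
      rw [hDdef, Matrix.conjTranspose_sub, Matrix.sub_mul, Matrix.sub_mul,
        Matrix.mul_sub, Matrix.mul_sub, e1, e2, e3]
      abel
    rw [hE G, hE Gstar, hDexp, e3, e4]
    abel
  rw [hkey, Matrix.mul_add, Matrix.trace_add, Complex.add_re]
  linarith [trace_mul_re_nonneg hW hD]
end

section
/- Let n be a positive integer and A an n×n Hermitian positive definite complex matrix. Then (tr A).re − log((det A).re) ≥ n, with equality if and only if A = I_n. (Here tr A and det A are real numbers since A is Hermitian positive definite, so the real parts equal the trace and determinant themselves.) -/
open Matrix ComplexOrder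

lemma herm_trace_eq_sum_eig {n : ℕ} {A : Matrix (Fin n) (Fin n) ℂ}
    (h : A.IsHermitian) : A.trace = ∑ i, (h.eigenvalues i : ℂ) := by
  conv_lhs => rw [h.spectral_theorem, Unitary.conjStarAlgAut_apply]
  rw [Matrix.trace_mul_cycle,
    (Matrix.mem_unitaryGroup_iff').mp (Matrix.IsHermitian.eigenvectorUnitary h).2, one_mul,
    Matrix.trace_diagonal]
  rfl

lemma eig_one_of_all_one {n : ℕ} {A : Matrix (Fin n) (Fin n) ℂ}
    (h : A.IsHermitian) (he : ∀ i, h.eigenvalues i = 1) : A = 1 := by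
  have := h.spectral_theorem
  rw [this, Unitary.conjStarAlgAut_apply]
  have : Matrix.diagonal (RCLike.ofReal ∘ h.eigenvalues) = (1 : Matrix (Fin n) (Fin n) ℂ) := by
    ext i j
    by_cases hij : i = j <;>
      simp [Matrix.diagonal, Matrix.one_apply, hij, he]
  rw [this, mul_one,
    (Matrix.mem_unitaryGroup_iff).mp (Matrix.IsHermitian.eigenvectorUnitary h).2]

/-- For an `n × n` Hermitian positive definite complex matrix `A`,
`Re (tr A) - log (Re (det A)) ≥ n`, with equality iff `A = I`. -/
theorem trace_sub_log_det_ge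
    (n : ℕ) (hn : 0 < n)
    (A : Matrix (Fin n) (Fin n) ℂ) (hA : A.PosDef) :
    (n : ℝ) ≤ (A.trace).re - Real.log ((A.det).re) ∧
    ((A.trace).re - Real.log ((A.det).re) = n ↔ A = 1) := by
  have hH := hA.isHermitian
  set lam := hH.eigenvalues with hlam
  have hpos : ∀ i, 0 < lam i := hA.eigenvalues_pos
  have htr : (A.trace).re = ∑ i, lam i := by
    rw [herm_trace_eq_sum_eig hH]
    push_cast
    simp [hlam]
  have hdet : (A.det).re = ∏ i, lam i := by
    rw [hH.det_eq_prod_eigenvalues]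
    norm_cast
  have hlog : Real.log ((A.det).re) = ∑ i, Real.log (lam i) := by
    rw [hdet, Real.log_prod (fun i _ => (hpos i).ne')]
  have key : (A.trace).re - Real.log ((A.det).re) = ∑ i, (lam i - Real.log (lam i)) := by
    rw [htr, hlog, Finset.sum_sub_distrib]
  have hterm : ∀ i, (1 : ℝ) ≤ lam i - Real.log (lam i) := fun i => by
    have := Real.log_le_sub_one_of_pos (hpos i); linarith
  have hge : (n : ℝ) ≤ (A.trace).re - Real.log ((A.det).re) := by
    rw [key]
    calc (n : ℝ) = ∑ _i : Fin n, (1 : ℝ) := by simp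
    _ ≤ _ := Finset.sum_le_sum (fun i _ => hterm i)
  refine ⟨hge, ?_, ?_⟩
  · intro heq
    apply eig_one_of_all_one hH
    intro i
    by_contra hne
    have hstrict : (1 : ℝ) < lam i - Real.log (lam i) := by
      have := Real.log_lt_sub_one_of_pos (hpos i) hne; linarith
    have : (n : ℝ) < ∑ j, (lam j - Real.log (lam j)) := by
      calc (n : ℝ) = ∑ _j : Fin n, (1 : ℝ) := by simp
      _ < _ := Finset.sum_lt_sum (fun j _ => hterm j) ⟨i, Finset.mem_univ i, hstrict⟩
    rw [← key, heq] at this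
    exact lt_irrefl _ this
  · rintro rfl
    simp [Matrix.trace_one, Matrix.det_one]
end

section
/- Let L be a positive integer and E an L×L Hermitian positive definite complex matrix. Then for every L×L Hermitian positive definite complex matrix W, (tr(W·E)).re − log((det W).re) ≥ L + log((det E).re), with equality if and only if W = E⁻¹. In other words, the unique minimizer over Hermitian positive definite weight matrices W of the weighted-MSE objective tr(W E) − log det W is W = E⁻¹, and the minimum value is L + log det E. -/
open Matrix ComplexOrder

private lemma key_trace_log (n : ℕ) (M : Matrix (Fin n) (Fin n) ℂ) (hM : M.PosDef) :
    (n : ℝ) ≤ M.trace.re - Real.log (M.det.re) ∧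
      (M.trace.re - Real.log (M.det.re) = (n : ℝ) ↔ M = 1) := by
  have hH := hM.isHermitian
  set lam := hH.eigenvalues with hlam
  have hpos : ∀ i, 0 < lam i := fun i => hM.eigenvalues_pos i
  have hU1 : (hH.eigenvectorUnitary : Matrix (Fin n) (Fin n) ℂ) *
      (star hH.eigenvectorUnitary : Matrix (Fin n) (Fin n) ℂ) = 1 :=
    (Matrix.mem_unitaryGroup_iff).mp hH.eigenvectorUnitary.2
  have hU2 : (star hH.eigenvectorUnitary : Matrix (Fin n) (Fin n) ℂ) *
      (hH.eigenvectorUnitary : Matrix (Fin n) (Fin n) ℂ) = 1 :=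
    (Matrix.mem_unitaryGroup_iff').mp hH.eigenvectorUnitary.2
  have ht : M.trace.re = ∑ i, lam i := by
    conv_lhs => rw [hH.spectral_theorem]
    rw [Unitary.conjStarAlgAut_apply, trace_mul_cycle, hU2, one_mul, trace_diagonal]
    simp [Complex.ofReal_sum, hlam]
  have hd : M.det.re = ∏ i, lam i := by
    rw [hH.det_eq_prod_eigenvalues]
    norm_cast
  have hlog : Real.log (M.det.re) = ∑ i, Real.log (lam i) := by
    rw [hd, Real.log_prod (fun i _ => (hpos i).ne')]
  have hterm : ∀ i : Fin n, (1 : ℝ) ≤ lam i - Real.log (lam i) := by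
    intro i
    have := Real.log_le_sub_one_of_pos (hpos i)
    linarith
  have hsum : M.trace.re - Real.log (M.det.re) = ∑ i, (lam i - Real.log (lam i)) := by
    rw [ht, hlog, Finset.sum_sub_distrib]
  have hn : (n : ℝ) = ∑ _i : Fin n, (1 : ℝ) := by simp
  constructor
  · rw [hsum, hn]
    exact Finset.sum_le_sum (fun i _ => hterm i)
  · constructor
    · intro heq
      have hall : ∀ i, lam i = 1 := by
        by_contra hc
        push_neg at hc
        obtain ⟨i, hi⟩ := hc
        have hstrict : (1 : ℝ) < lam i - Real.log (lam i) := by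
          have := Real.log_lt_sub_one_of_pos (hpos i) hi
          linarith
        have : (n : ℝ) < ∑ i, (lam i - Real.log (lam i)) := by
          rw [hn]
          exact Finset.sum_lt_sum (fun j _ => hterm j) ⟨i, Finset.mem_univ i, hstrict⟩
        rw [← hsum, heq] at this
        exact lt_irrefl _ this
      have hdiag : diagonal (RCLike.ofReal ∘ lam) = (1 : Matrix (Fin n) (Fin n) ℂ) := by
        have : RCLike.ofReal ∘ lam = fun _ : Fin n => (1 : ℂ) := by
          funext i; simp [hall i]
        rw [this, diagonal_one]
      rw [hH.spectral_theorem, hdiag, Unitary.conjStarAlgAut_apply, mul_one, hU1]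
    · rintro rfl
      simp [trace_one]

/-- For an `L × L` Hermitian positive definite matrix `E`, the unique
minimizer over Hermitian positive definite weight matrices `W` of
`Re (tr (W E)) - log (Re (det W))` is `W = E⁻¹`, with minimum value `L + log (Re (det E))`. -/
theorem weight_update_optimal
    (L : ℕ) (hL : 0 < L)
    (E : Matrix (Fin L) (Fin L) ℂ) (hE : E.PosDef) :
    ∀ W : Matrix (Fin L) (Fin L) ℂ, W.PosDef →
      ((L : ℝ) + Real.log ((E.det).re) ≤ ((W * E).trace).re - Real.log ((W.det).re) ∧
       (((W * E).trace).re - Real.log ((W.det).re) = (L : ℝ) + Real.log ((E.det).re) ↔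
         W = E⁻¹)) := by
  intro W hW
  open scoped MatrixOrder in
  set S := CFC.sqrt E with hSdef
  open scoped MatrixOrder in
  have hS : S.PosSemidef := nonneg_iff_posSemidef.mp (CFC.sqrt_nonneg E)
  have hSH : S.IsHermitian := hS.1
  open scoped MatrixOrder in
  have hSS : S * S = E := CFC.sqrt_mul_sqrt_self E hE.posSemidef.nonneg
  -- determinant facts
  have hEdet : 0 < E.det := hE.det_pos
  have hEdet_re : 0 < E.det.re := by
    rw [Complex.lt_def] at hEdet; simpa using hEdet.1
  have hEdet_im : E.det.im = 0 := by
    rw [Complex.lt_def] at hEdet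
    simpa using hEdet.2.symm
  have hWdet : 0 < W.det := hW.det_pos
  have hWdet_re : 0 < W.det.re := by
    rw [Complex.lt_def] at hWdet; simpa using hWdet.1
  have hWdet_im : W.det.im = 0 := by
    rw [Complex.lt_def] at hWdet
    simpa using hWdet.2.symm
  have hSdetE : S.det * S.det = E.det := by rw [← det_mul, hSS]
  have hSdet_ne : S.det ≠ 0 := by
    intro h
    rw [h, mul_zero] at hSdetE
    exact hEdet.ne' hSdetE.symm
  have hSunit : IsUnit S.det := isUnit_iff_ne_zero.mpr hSdet_ne
  -- M := S * W * S is positive definite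
  set M := S * W * S with hMdef
  have hMpd : M.PosDef := by
    refine PosDef.of_dotProduct_mulVec_pos ?_ ?_
    · show Mᴴ = M
      rw [hMdef, conjTranspose_mul, conjTranspose_mul, hSH.eq, hW.1.eq, mul_assoc]
    · intro x hx
      have hy : S *ᵥ x ≠ 0 := by
        intro h
        apply hx
        have := congrArg (fun v => S⁻¹ *ᵥ v) h
        simpa [mulVec_mulVec, nonsing_inv_mul _ hSunit] using this
      have hstar : star x ᵥ* S = star (S *ᵥ x) := by
        rw [star_mulVec, hSH.eq]
      calc (0 : ℂ) < star (S *ᵥ x) ⬝ᵥ W *ᵥ (S *ᵥ x) := hW.dotProduct_mulVec_pos hy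
        _ = star x ⬝ᵥ M *ᵥ x := by
            rw [← hstar, ← dotProduct_mulVec, mulVec_mulVec, mulVec_mulVec, hMdef, mul_assoc]
  -- trace identity
  have htr : (W * E).trace = M.trace := by
    rw [hMdef, ← hSS, ← mul_assoc, trace_mul_cycle]
  -- determinant identity
  have hMdet : M.det = W.det * E.det := by
    rw [hMdef, det_mul, det_mul, ← hSdetE]; ring
  have hMdet_re : M.det.re = W.det.re * E.det.re := by
    rw [hMdet, Complex.mul_re, hWdet_im, hEdet_im, mul_zero, sub_zero]
  have hlogM : Real.log (M.det.re) = Real.log (W.det.re) + Real.log (E.det.re) := by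
    rw [hMdet_re, Real.log_mul hWdet_re.ne' hEdet_re.ne']
  obtain ⟨hineq, hiff⟩ := key_trace_log L M hMpd
  -- E⁻¹ = S⁻¹ * S⁻¹
  have hEinv : E⁻¹ = S⁻¹ * S⁻¹ := by rw [← hSS, Matrix.mul_inv_rev]
  have hM1iff : M = 1 ↔ W = E⁻¹ := by
    constructor
    · intro h
      have h2 : S⁻¹ * (S * W * S) * S⁻¹ = W := by
        rw [← mul_assoc, ← mul_assoc, nonsing_inv_mul _ hSunit, one_mul, mul_assoc,
          mul_nonsing_inv _ hSunit, mul_one]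
      calc W = S⁻¹ * (S * W * S) * S⁻¹ := h2.symm
        _ = S⁻¹ * 1 * S⁻¹ := by rw [← hMdef, h]
        _ = E⁻¹ := by rw [mul_one, hEinv]
    · rintro rfl
      rw [hMdef, hEinv, ← mul_assoc, mul_nonsing_inv _ hSunit, one_mul,
        nonsing_inv_mul _ hSunit]
  rw [hlogM] at hineq hiff
  constructor
  · rw [htr]
    linarith
  · rw [htr, ← hM1iff, ← hiff]
    constructor <;> intro h <;> linarith
end

section
/- Let L be a positive integer, F an L×L complex matrix, J̄ an L×L Hermitian positive definite complex matrix, J = F Fᴴ + J̄, and for an L×L complex matrix G define E(G) = I_L − Gᴴ F − Fᴴ G + Gᴴ J G. Then for every L×L complex matrix G and every L×L Hermitian positive definite complex matrix W, (tr(W·E(G))).re − log((det W).re) ≥ L − log((det(I_L + Fᴴ J̄⁻¹ F)).re), and equality holds for G* = J⁻¹ F and W* = (E(G*))⁻¹. Hence the minimum over (G, W) of the per-user WMMSE objective tr(W E(G)) − log det W equals L − R, where R = log det(I_L + Fᴴ J̄⁻¹ F) is the achievable rate. -/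
open Matrix ComplexOrder
open scoped MatrixOrder

private lemma aux_trace_eq_sum_eig {n : Type*} [Fintype n] [DecidableEq n]
    {A : Matrix n n ℂ} (hA : A.IsHermitian) :
    A.trace = ∑ i, (hA.eigenvalues i : ℂ) := by
  conv_lhs => rw [hA.spectral_theorem, Unitary.conjStarAlgAut_apply]
  rw [Matrix.trace_mul_comm, ← Matrix.mul_assoc,
    (Matrix.mem_unitaryGroup_iff').mp (hA.eigenvectorUnitary).2, Matrix.one_mul,
    Matrix.trace_diagonal]
  rfl

private lemma aux_psd_trace_re_nonneg {n : Type*} [Fintype n] [DecidableEq n]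
    {M : Matrix n n ℂ} (hM : M.PosSemidef) : 0 ≤ M.trace.re := by
  rw [aux_trace_eq_sum_eig hM.1, Complex.re_sum]
  exact Finset.sum_nonneg fun i _ => by simpa using hM.eigenvalues_nonneg i

private lemma aux_trace_mul_nonneg {n : Type*} [Fintype n] [DecidableEq n]
    {W P : Matrix n n ℂ} (hW : W.PosSemidef) (hP : P.PosSemidef) :
    0 ≤ ((W * P).trace).re := by
  obtain ⟨B, rfl⟩ := CStarAlgebra.nonneg_iff_eq_star_mul_self.mp hP.nonneg
  rw [← Matrix.mul_assoc, Matrix.trace_mul_comm, ← Matrix.mul_assoc]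
  exact aux_psd_trace_re_nonneg (hW.mul_mul_conjTranspose_same B)

private lemma aux_trace_bound {n : Type*} [Fintype n] [DecidableEq n]
    {M : Matrix n n ℂ} (hM : M.PosDef) :
    (Fintype.card n : ℝ) ≤ M.trace.re - Real.log (M.det.re) := by
  have htr : M.trace.re = ∑ i, hM.1.eigenvalues i := by
    rw [aux_trace_eq_sum_eig hM.1, Complex.re_sum]; simp
  have hdet : M.det.re = ∏ i, hM.1.eigenvalues i := by
    rw [hM.1.det_eq_prod_eigenvalues]
    norm_cast
  rw [htr, hdet, Real.log_prod (fun i _ => (hM.eigenvalues_pos i).ne'),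
    ← Finset.sum_sub_distrib]
  calc (Fintype.card n : ℝ) = ∑ _i : n, (1 : ℝ) := by simp
    _ ≤ ∑ i, (hM.1.eigenvalues i - Real.log (hM.1.eigenvalues i)) := by
        refine Finset.sum_le_sum fun i _ => ?_
        have := Real.log_le_sub_one_of_pos (hM.eigenvalues_pos i)
        linarith

private lemma aux_weighted {n : Type*} [Fintype n] [DecidableEq n]
    {W A : Matrix n n ℂ} (hW : W.PosDef) (hA : A.PosDef) :
    (Fintype.card n : ℝ) + Real.log ((A.det).re) ≤
      ((W * A).trace).re - Real.log ((W.det).re) := by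
  have hPS := hA.posSemidef
  set S := CFC.sqrt A with hSdef
  have hS : S.PosSemidef := (CFC.sqrt_nonneg A).posSemidef
  have hSh : Sᴴ = S := hS.1
  have hSS : S * S = A := CFC.sqrt_mul_sqrt_self A hPS.nonneg
  have hdet2 : S.det * S.det = A.det := by rw [← Matrix.det_mul, hSS]
  have hdS : IsUnit S.det := by
    refine isUnit_iff_ne_zero.mpr fun h => ?_
    have := hA.det_pos.ne'
    rw [← hdet2, h, zero_mul] at this
    exact this rfl
  have hMpd : (S * W * S).PosDef := by
    refine Matrix.PosDef.of_dotProduct_mulVec_pos ?_ (fun x hx => ?_)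
    · have := isHermitian_conjTranspose_mul_mul S hW.1
      rwa [hSh] at this
    · have hxS : S *ᵥ x ≠ 0 := by
        intro h
        apply hx
        have hinj := Matrix.mulVec_injective_iff_isUnit.mpr
          ((Matrix.isUnit_iff_isUnit_det S).mpr hdS)
        exact hinj (by simpa using h)
      rw [show S * W * S = Sᴴ * W * S by rw [hSh]]
      simpa only [star_mulVec, dotProduct_mulVec, vecMul_vecMul] using hW.dotProduct_mulVec_pos hxS
  have htr : (S * W * S).trace = (W * A).trace := by
    rw [Matrix.trace_mul_comm (S * W) S, ← Matrix.mul_assoc, hSS, Matrix.trace_mul_comm]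
  have hdetM : (S * W * S).det = W.det * A.det := by
    rw [Matrix.det_mul, Matrix.det_mul, ← hdet2]; ring
  have hWre : 0 < W.det.re ∧ W.det.im = 0 := by
    have := hW.det_pos; rw [Complex.lt_def] at this
    exact ⟨by simpa using this.1, (this.2).symm⟩
  have hAre : 0 < A.det.re ∧ A.det.im = 0 := by
    have := hA.det_pos; rw [Complex.lt_def] at this
    exact ⟨by simpa using this.1, (this.2).symm⟩
  have hre : (W.det * A.det).re = W.det.re * A.det.re := by
    rw [Complex.mul_re, hWre.2, hAre.2]; ring
  have hb := aux_trace_bound hMpd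
  rw [htr, hdetM, hre, Real.log_mul hWre.1.ne' hAre.1.ne'] at hb
  linarith

/-- With `J = F Fᴴ + J̄`, `J̄` Hermitian positive definite, and the MSE
matrix `E(G) = I - Gᴴ F - Fᴴ G + Gᴴ J G`, for every `G` and every Hermitian positive
definite weight `W` one has
`Re (tr (W E(G))) - log (Re (det W)) ≥ L - log (Re (det (I + Fᴴ J̄⁻¹ F)))`,
with equality at `G* = J⁻¹ F` and `W* = (E(G*))⁻¹`.  Hence the minimum of the
WMMSE objective equals `L - R` where `R = log det (I + Fᴴ J̄⁻¹ F)` is the rate. -/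
theorem wmmse_objective_min_eq_L_sub_rate
    (L : ℕ) (hL : 0 < L)
    (F Jbar : Matrix (Fin L) (Fin L) ℂ) (hJbar : Jbar.PosDef)
    (J : Matrix (Fin L) (Fin L) ℂ) (hJ : J = F * Fᴴ + Jbar)
    (E : Matrix (Fin L) (Fin L) ℂ → Matrix (Fin L) (Fin L) ℂ)
    (hE : ∀ G, E G = 1 - Gᴴ * F - Fᴴ * G + Gᴴ * J * G)
    (Gstar : Matrix (Fin L) (Fin L) ℂ) (hGstar : Gstar = J⁻¹ * F)
    (Wstar : Matrix (Fin L) (Fin L) ℂ) (hWstar : Wstar = (E Gstar)⁻¹) :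
    (∀ (G W : Matrix (Fin L) (Fin L) ℂ), W.PosDef →
        (L : ℝ) - Real.log (((1 + Fᴴ * Jbar⁻¹ * F).det).re) ≤
          ((W * E G).trace).re - Real.log ((W.det).re)) ∧
    ((Wstar * E Gstar).trace).re - Real.log ((Wstar.det).re) =
      (L : ℝ) - Real.log (((1 + Fᴴ * Jbar⁻¹ * F).det).re) := by
  have hJpd : J.PosDef := by
    rw [hJ]
    exact Matrix.PosDef.posSemidef_add (posSemidef_self_mul_conjTranspose F) hJbar
  have hJdet : IsUnit J.det := hJpd.det_pos.ne'.isUnit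
  have hJinv : J⁻¹ * J = 1 := nonsing_inv_mul J hJdet
  have hJinv' : J * J⁻¹ = 1 := mul_nonsing_inv J hJdet
  have hbardet : IsUnit Jbar.det := hJbar.det_pos.ne'.isUnit
  have hbar1 : Jbar * Jbar⁻¹ = 1 := mul_nonsing_inv Jbar hbardet
  set K : Matrix (Fin L) (Fin L) ℂ := 1 + Fᴴ * Jbar⁻¹ * F with hK
  set Es : Matrix (Fin L) (Fin L) ℂ := 1 - Fᴴ * J⁻¹ * F with hEs
  have hKpd : K.PosDef := Matrix.PosDef.add_posSemidef Matrix.PosDef.one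
    (hJbar.inv.posSemidef.conjTranspose_mul_mul_same F)
  have hKdet : IsUnit K.det := hKpd.det_pos.ne'.isUnit
  have hFF : F * Fᴴ = J - Jbar := by rw [hJ, add_sub_cancel_right]
  have key : J⁻¹ * (F * Fᴴ) * Jbar⁻¹ = Jbar⁻¹ - J⁻¹ := by
    rw [hFF, Matrix.mul_sub, Matrix.sub_mul, hJinv, Matrix.one_mul,
      Matrix.mul_assoc, hbar1, Matrix.mul_one]
  have hEsK : Es * K = 1 := by
    have expand : Es * K = 1 + Fᴴ * Jbar⁻¹ * F - Fᴴ * J⁻¹ * F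
        - Fᴴ * (J⁻¹ * (F * Fᴴ) * Jbar⁻¹) * F := by
      rw [hEs, hK]; noncomm_ring
    rw [expand, key]
    noncomm_ring
  have hEsinv : K⁻¹ = Es := inv_eq_left_inv hEsK
  have hEspd : Es.PosDef := hEsinv ▸ hKpd.inv
  have hKEs : K * Es = 1 := by rw [← hEsinv]; exact mul_nonsing_inv K hKdet
  have hGstarH : Gstarᴴ = Fᴴ * J⁻¹ := by
    rw [hGstar, conjTranspose_mul, hJpd.inv.isHermitian.eq]
  have hJG : J * Gstar = F := by rw [hGstar, ← Matrix.mul_assoc, hJinv', Matrix.one_mul]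
  have hGJ : Gstarᴴ * J = Fᴴ := by rw [hGstarH, Matrix.mul_assoc, hJinv, Matrix.mul_one]
  have hsplit : ∀ G, E G = Es + (G - Gstar)ᴴ * J * (G - Gstar) := by
    intro G
    have hexp : (G - Gstar)ᴴ * J * (G - Gstar) =
        Gᴴ * J * G - Gᴴ * (J * Gstar) - Gstarᴴ * J * G + Gstarᴴ * J * Gstar := by
      simp only [conjTranspose_sub]; noncomm_ring
    rw [hexp, hJG, hGJ, hGstar, hE G, hEs]
    noncomm_ring
  have hEGstar : E Gstar = Es := by
    have := hsplit Gstar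
    simpa using this
  -- determinant relation
  have hdetmul : Es.det * K.det = 1 := by rw [← Matrix.det_mul, hEsK, Matrix.det_one]
  have hEsre : 0 < Es.det.re ∧ Es.det.im = 0 := by
    have := hEspd.det_pos; rw [Complex.lt_def] at this
    exact ⟨by simpa using this.1, (this.2).symm⟩
  have hKre : 0 < K.det.re ∧ K.det.im = 0 := by
    have := hKpd.det_pos; rw [Complex.lt_def] at this
    exact ⟨by simpa using this.1, (this.2).symm⟩
  have hmulre : Es.det.re * K.det.re = 1 := by
    have := congrArg Complex.re hdetmul
    rwa [Complex.mul_re, hEsre.2, hKre.2, mul_zero, sub_zero] at this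
  have hlog : Real.log (Es.det.re) = - Real.log (K.det.re) := by
    have : Es.det.re = (K.det.re)⁻¹ := by
      exact eq_inv_of_mul_eq_one_left hmulre
    rw [this, Real.log_inv]
  constructor
  · intro G W hW
    have hsplitG := hsplit G
    have hterm : 0 ≤ ((W * ((G - Gstar)ᴴ * J * (G - Gstar))).trace).re :=
      aux_trace_mul_nonneg hW.posSemidef (hJpd.posSemidef.conjTranspose_mul_mul_same _)
    have htr : ((W * E G).trace).re =
        ((W * Es).trace).re + ((W * ((G - Gstar)ᴴ * J * (G - Gstar))).trace).re := by
      rw [hsplitG, Matrix.mul_add, Matrix.trace_add, Complex.add_re]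
    have hwb := aux_weighted hW hEspd
    simp only [Fintype.card_fin] at hwb
    rw [hlog] at hwb
    rw [htr]
    linarith
  · have hWK : Wstar = K := by
      rw [hWstar, hEGstar, ← hEsinv, Matrix.nonsing_inv_nonsing_inv K hKdet]
    rw [hWK, hEGstar, hKEs]
    have : (Matrix.trace (1 : Matrix (Fin L) (Fin L) ℂ)).re = (L : ℝ) := by
      simp [Matrix.trace_one]
    rw [this]
end

section
/- Let n and L be positive integers and let E : ℝⁿ → Mat_{L×L}(ℂ) be a map that is Fréchet differentiable at a point x̂ ∈ ℝⁿ, such that E(x) is Hermitian for every x and E(x̂) is Hermitian positive definite. Then the real-valued functions f(x) = (tr(E(x̂)⁻¹ · E(x))).re and g(x) = log((det E(x)).re) are both differentiable at x̂ and have the same Fréchet derivative at x̂: fderiv f(x̂) = fderiv g(x̂). -/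
open Matrix ComplexOrder

attribute [local instance] Matrix.normedAddCommGroup Matrix.normedSpace

private lemma det_updateRow_eq' {L : ℕ} (A : Matrix (Fin L) (Fin L) ℂ) (i : Fin L)
    (b : Fin L → ℂ) :
    (A.updateRow i b).det = ∑ j, A.adjugate j i * b j := by
  have h1 : (A.updateRow i b).det = (Aᵀ.updateCol i b).det := by
    rw [Matrix.updateCol_transpose, Matrix.det_transpose]
  rw [h1, ← Matrix.cramer_apply, Matrix.cramer_eq_adjugate_mulVec, ← Matrix.adjugate_transpose]
  simp [Matrix.mulVec, dotProduct]

private lemma key_sum_det {L : ℕ} (A : Matrix (Fin L) (Fin L) ℂ) (hu : A.det ≠ 0)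
    (H : Matrix (Fin L) (Fin L) ℂ) :
    ∑ i, (A.updateRow i (H i)).det = A.det * ((A⁻¹ * H).trace) := by
  have h2 : ∑ i, (A.updateRow i (H i)).det = (A.adjugate * H).trace := by
    simp only [det_updateRow_eq', Matrix.trace, Matrix.diag, Matrix.mul_apply]
    rw [Finset.sum_comm]
  rw [h2, Matrix.inv_def, Ring.inverse_eq_inv, Matrix.smul_mul, Matrix.trace_smul,
    smul_eq_mul, ← mul_assoc, mul_inv_cancel₀ hu, one_mul]

/-- If `E : ℝⁿ → Mat_{L×L}(ℂ)` is Fréchet differentiable at `x̂`,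
takes Hermitian values, and `E(x̂)` is Hermitian positive definite, then the
functions `f(x) = Re (tr (E(x̂)⁻¹ E(x)))` and `g(x) = log (Re (det E(x)))` are
differentiable at `x̂` with the same Fréchet derivative there. -/
theorem gradient_matching_trace_logdet
    (n L : ℕ) (hn : 0 < n) (hL : 0 < L)
    (E : (Fin n → ℝ) → Matrix (Fin L) (Fin L) ℂ)
    (xhat : Fin n → ℝ)
    (hdiff : DifferentiableAt ℝ E xhat)
    (hherm : ∀ x, (E x).IsHermitian)
    (hpos : (E xhat).PosDef)
    (f g : (Fin n → ℝ) → ℝ)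
    (hf : ∀ x, f x = (((E xhat)⁻¹ * E x).trace).re)
    (hg : ∀ x, g x = Real.log (((E x).det).re)) :
    DifferentiableAt ℝ f xhat ∧ DifferentiableAt ℝ g xhat ∧
      fderiv ℝ f xhat = fderiv ℝ g xhat := by
  classical
  set A := E xhat with hA
  have hdetpos : (0 : ℂ) < A.det := hpos.det_pos
  have hdre : 0 < A.det.re := by
    have := (Complex.lt_def.mp hdetpos).1; simpa using this
  have him : A.det.im = 0 := by
    have := (Complex.lt_def.mp hdetpos).2; simpa using this.symm
  set d : ℝ := A.det.re with hd
  have hdetd : A.det = (d : ℂ) := by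
    apply Complex.ext <;> simp [hd, him]
  have hdet_ne : A.det ≠ 0 := ne_of_gt hdetpos
  have hE' : HasFDerivAt E (fderiv ℝ E xhat) xhat := hdiff.hasFDerivAt
  set E' := fderiv ℝ E xhat with hE'def
  -- the determinant as a continuous multilinear map over ℝ
  let dc : ContinuousMultilinearMap ℝ (fun _ : Fin L => (Fin L → ℂ)) ℂ :=
    { toMultilinearMap :=
        MultilinearMap.restrictScalars ℝ
          (Matrix.detRowAlternating (n := Fin L) (R := ℂ)).toMultilinearMap
      cont := (continuous_id.matrix_det :
        Continuous fun M : Matrix (Fin L) (Fin L) ℂ => M.det) }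
  let D : Matrix (Fin L) (Fin L) ℂ →L[ℝ] ℂ := dc.linearDeriv A
  have hdc : HasFDerivAt (fun M : Matrix (Fin L) (Fin L) ℂ => M.det)
      D A := dc.hasFDerivAt A
  have hgdet : HasFDerivAt (fun x => (E x).det) (D ∘L E') xhat :=
    hdc.comp xhat hE'
  have hgre : HasFDerivAt (fun x => ((E x).det).re)
      (Complex.reCLM ∘L (D ∘L E')) xhat :=
    (Complex.reCLM.hasFDerivAt).comp xhat hgdet
  have hlog : HasFDerivAt (fun x => Real.log (((E x).det).re))
      (d⁻¹ • (Complex.reCLM ∘L (D ∘L E'))) xhat := by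
    have h := (Real.hasDerivAt_log (x := ((E xhat).det).re) (ne_of_gt hdre)).comp_hasFDerivAt
      xhat hgre
    exact h
  have hgeq : g = fun x => Real.log (((E x).det).re) := funext hg
  -- the trace map
  let φ : Matrix (Fin L) (Fin L) ℂ →ₗ[ℝ] ℝ :=
    { toFun := fun M => ((A⁻¹ * M).trace).re
      map_add' := by intro x y; simp [Matrix.mul_add]
      map_smul' := by intro c x; simp [Matrix.mul_smul, Complex.smul_re] }
  let Φ : Matrix (Fin L) (Fin L) ℂ →L[ℝ] ℝ := LinearMap.toContinuousLinearMap φ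
  have hΦ : HasFDerivAt f (Φ ∘L E') xhat := by
    have h : HasFDerivAt (fun x => Φ (E x)) (Φ ∘L E') xhat := Φ.hasFDerivAt.comp xhat hE'
    have hfeq : f = fun x => Φ (E x) := funext hf
    rw [hfeq]; exact h
  refine ⟨hΦ.differentiableAt, by rw [hgeq]; exact hlog.differentiableAt, ?_⟩
  rw [hΦ.fderiv, hgeq, hlog.fderiv]
  have hlin : ∀ H : Matrix (Fin L) (Fin L) ℂ,
      D H = (d : ℂ) * ((A⁻¹ * H).trace) := by
    intro H
    show dc.linearDeriv A H = _
    refine (ContinuousMultilinearMap.linearDeriv_apply (f := dc) (x := A) (y := H)).trans ?_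
    trans (∑ i, (A.updateRow i (H i)).det)
    · exact Finset.sum_congr rfl fun i _ => rfl
    · rw [key_sum_det A hdet_ne H, hdetd]
  ext v
  simp only [ContinuousLinearMap.coe_comp', Function.comp_apply,
    ContinuousLinearMap.smul_apply, Complex.reCLM_apply]
  have hΦv : Φ (E' v) = ((A⁻¹ * E' v).trace).re := rfl
  rw [hΦv, hlin (E' v), Complex.re_ofReal_mul]
  field_simp
  rw [smul_eq_mul, one_div, mul_comm _ d, ← mul_assoc, inv_mul_cancel₀ (ne_of_gt hdre), one_mul]
end
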